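/- Let p and q be distinct prime numbers with p ≡ 3 (mod 4) and q ≡ 3 (mod 4). Then the quaternion algebras ℍ[ℚ, −1, p] and ℍ[ℚ, −1, q] are not isomorphic as ℚ-algebras. -/

import Mathlib

open Quaternion

-- sum of two squares is zero mod a prime ≡ 3 mod 4 only trivially
lemma aux_sq_add_sq {q : ℕ} [Fact q.Prime] (hq4 : q % 4 = 3) (a b : ZMod q)
    (h : a ^ 2 + b ^ 2 = 0) : a = 0 ∧ b = 0 := by
  have hneg : ¬ IsSquare (-1 : ZMod q) := by
    rw [ZMod.exists_sq_eq_neg_one_iff]; simp [hq4]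
  by_cases hb : b = 0
  · subst hb; simp at h; exact ⟨h, rfl⟩
  · exfalso
    apply hneg
    refine ⟨a * b⁻¹, ?_⟩
    have : a ^ 2 = -b ^ 2 := by linear_combination h
    field_simp [← sq]
    linear_combination -this

-- descent: X² + p W² = q (Y² + Z²) has only the trivial integer solution,
-- when q ≡ 3 mod 4 and p is a square mod q (p ≠ q primes)
lemma aux_descent (p q : ℕ) (hp : p.Prime) (hq : q.Prime) (hne : p ≠ q) (hq4 : q % 4 = 3)
    (hsq : IsSquare ((p : ZMod q))) :
    ∀ n : ℕ, ∀ X W Y Z : ℤ, X.natAbs + W.natAbs + Y.natAbs + Z.natAbs ≤ n →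
      X ^ 2 + (p : ℤ) * W ^ 2 = (q : ℤ) * (Y ^ 2 + Z ^ 2) →
      X = 0 ∧ W = 0 ∧ Y = 0 ∧ Z = 0 := by
  haveI : Fact q.Prime := ⟨hq⟩
  have hq0 : (q : ℤ) ≠ 0 := by exact_mod_cast hq.ne_zero
  have hpq : ¬ (q ∣ p) := by
    intro hd
    exact hne ((Nat.prime_dvd_prime_iff_eq hq hp).mp hd).symm
  intro n
  induction n using Nat.strong_induction_on with
  | _ n IH =>
    intro X W Y Z hbound heq
    by_cases h0 : X.natAbs + W.natAbs + Y.natAbs + Z.natAbs = 0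
    · refine ⟨?_, ?_, ?_, ?_⟩ <;> rw [← Int.natAbs_eq_zero] <;> omega
    · obtain ⟨r, hr⟩ := hsq
      have hr0 : r ≠ 0 := by
        intro h
        rw [h, mul_zero] at hr
        exact hpq ((ZMod.natCast_eq_zero_iff p q).mp hr)
      -- reduce mod q
      have h1 : ((X : ZMod q)) ^ 2 + ((r * W : ZMod q)) ^ 2 = 0 := by
        have := congrArg (Int.cast : ℤ → ZMod q) heq
        push_cast at this
        rw [ZMod.natCast_self] at this
        push_cast
        rw [mul_pow]
        rw [← sq] at hr
        rw [← hr]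
        rw [this]
        ring
      obtain ⟨hX0, hrW0⟩ := aux_sq_add_sq hq4 _ _ h1
      have hW0 : (W : ZMod q) = 0 := by
        rcases mul_eq_zero.mp hrW0 with h | h
        · exact absurd h hr0
        · exact h
      obtain ⟨X₁, hX₁⟩ := (ZMod.intCast_zmod_eq_zero_iff_dvd X q).mp hX0
      obtain ⟨W₁, hW₁⟩ := (ZMod.intCast_zmod_eq_zero_iff_dvd W q).mp hW0
      have h2 : (q : ℤ) * (X₁ ^ 2 + (p : ℤ) * W₁ ^ 2) = Y ^ 2 + Z ^ 2 := by
        apply mul_left_cancel₀ hq0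
        rw [hX₁, hW₁] at heq
        linear_combination heq
      have h3 : ((Y : ZMod q)) ^ 2 + ((Z : ZMod q)) ^ 2 = 0 := by
        have := congrArg (Int.cast : ℤ → ZMod q) h2
        push_cast at this
        rw [ZMod.natCast_self] at this
        push_cast
        rw [← this]
        ring
      obtain ⟨hY0, hZ0⟩ := aux_sq_add_sq hq4 _ _ h3
      obtain ⟨Y₁, hY₁⟩ := (ZMod.intCast_zmod_eq_zero_iff_dvd Y q).mp hY0
      obtain ⟨Z₁, hZ₁⟩ := (ZMod.intCast_zmod_eq_zero_iff_dvd Z q).mp hZ0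
      have h4 : X₁ ^ 2 + (p : ℤ) * W₁ ^ 2 = (q : ℤ) * (Y₁ ^ 2 + Z₁ ^ 2) := by
        apply mul_left_cancel₀ hq0
        rw [hY₁, hZ₁] at h2
        linear_combination h2
      have eX : X.natAbs = q * X₁.natAbs := by rw [hX₁, Int.natAbs_mul, Int.natAbs_natCast]
      have eW : W.natAbs = q * W₁.natAbs := by rw [hW₁, Int.natAbs_mul, Int.natAbs_natCast]
      have eY : Y.natAbs = q * Y₁.natAbs := by rw [hY₁, Int.natAbs_mul, Int.natAbs_natCast]
      have eZ : Z.natAbs = q * Z₁.natAbs := by rw [hZ₁, Int.natAbs_mul, Int.natAbs_natCast]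
      have hq2 : 2 ≤ q := hq.two_le
      have hSsum : X.natAbs + W.natAbs + Y.natAbs + Z.natAbs
          = q * (X₁.natAbs + W₁.natAbs + Y₁.natAbs + Z₁.natAbs) := by
        rw [eX, eW, eY, eZ]; ring
      have hmul : 2 * (X₁.natAbs + W₁.natAbs + Y₁.natAbs + Z₁.natAbs)
          ≤ q * (X₁.natAbs + W₁.natAbs + Y₁.natAbs + Z₁.natAbs) :=
        Nat.mul_le_mul_right _ hq2
      have hlt : X₁.natAbs + W₁.natAbs + Y₁.natAbs + Z₁.natAbs < n := by omega
      obtain ⟨e1, e2, e3, e4⟩ :=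
        IH _ hlt X₁ W₁ Y₁ Z₁ le_rfl h4
      rw [e1] at hX₁; rw [e2] at hW₁; rw [e3] at hY₁; rw [e4] at hZ₁
      simp at hX₁ hW₁ hY₁ hZ₁
      exact ⟨hX₁, hW₁, hY₁, hZ₁⟩

lemma aux_rat (p q : ℕ) (hp : p.Prime) (hq : q.Prime) (hne : p ≠ q) (hq4 : q % 4 = 3)
    (hsq : IsSquare ((p : ZMod q))) (b c d : ℚ) :
    -b ^ 2 + (q : ℚ) * c ^ 2 + (q : ℚ) * d ^ 2 ≠ (p : ℚ) := by
  intro h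
  set D : ℤ := (b.den : ℤ) * c.den * d.den with hD
  have hD0 : D ≠ 0 := by
    simp [hD]
  set X : ℤ := b.num * c.den * d.den with hX
  set Y : ℤ := c.num * b.den * d.den with hY
  set Z : ℤ := d.num * b.den * c.den with hZ
  have hb : (b.num : ℚ) = b * b.den :=
    (div_eq_iff (by exact_mod_cast b.den_nz)).mp (Rat.num_div_den b)
  have hc : (c.num : ℚ) = c * c.den :=
    (div_eq_iff (by exact_mod_cast c.den_nz)).mp (Rat.num_div_den c)
  have hd : (d.num : ℚ) = d * d.den :=
    (div_eq_iff (by exact_mod_cast d.den_nz)).mp (Rat.num_div_den d)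
  have key : (X : ℚ) ^ 2 + (p : ℚ) * (D : ℚ) ^ 2 = (q : ℚ) * ((Y : ℚ) ^ 2 + (Z : ℚ) ^ 2) := by
    have eX : (X : ℚ) = b * ((b.den : ℚ) * c.den * d.den) := by
      push_cast [hX]; rw [hb]; ring
    have eY : (Y : ℚ) = c * ((b.den : ℚ) * c.den * d.den) := by
      push_cast [hY]; rw [hc]; ring
    have eZ : (Z : ℚ) = d * ((b.den : ℚ) * c.den * d.den) := by
      push_cast [hZ]; rw [hd]; ring
    have eD : (D : ℚ) = (b.den : ℚ) * c.den * d.den := by push_cast [hD]; ring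
    rw [eX, eY, eZ, eD]
    linear_combination (-((b.den : ℚ) * c.den * d.den) ^ 2) * h
  have keyZ : X ^ 2 + (p : ℤ) * D ^ 2 = (q : ℤ) * (Y ^ 2 + Z ^ 2) := by exact_mod_cast key
  obtain ⟨-, hW, -, -⟩ := aux_descent p q hp hq hne hq4 hsq
    (X.natAbs + D.natAbs + Y.natAbs + Z.natAbs) X D Y Z le_rfl keyZ
  exact hD0 hW

lemma aux_not_sq_rat (p : ℕ) (hp : p.Prime) (a : ℚ) : a ^ 2 ≠ (p : ℚ) := by
  intro h
  have hirr : Irrational (Real.sqrt p) := hp.irrational_sqrt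
  apply hirr
  refine ⟨|a|, ?_⟩
  have hR : ((a : ℝ)) ^ 2 = (p : ℝ) := by exact_mod_cast h
  rw [← hR, Real.sqrt_sq_eq_abs]
  push_cast
  rfl

lemma aux_main (p q : ℕ) (hp : p.Prime) (hq : q.Prime) (hne : p ≠ q) (hq4 : q % 4 = 3)
    (hsq : IsSquare ((p : ZMod q)))
    (φ : ℍ[ℚ, -1, (p : ℚ)] ≃ₐ[ℚ] ℍ[ℚ, -1, (q : ℚ)]) : False := by
  set J : ℍ[ℚ, -1, (q : ℚ)] := φ ⟨0, 0, 1, 0⟩ with hJdef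
  have hjj : (⟨0, 0, 1, 0⟩ : ℍ[ℚ, -1, (p : ℚ)]) * ⟨0, 0, 1, 0⟩ = algebraMap ℚ _ (p : ℚ) := by
    rw [QuaternionAlgebra.algebraMap_eq]
    ext <;> simp [QuaternionAlgebra.re_mul, QuaternionAlgebra.imI_mul,
      QuaternionAlgebra.imJ_mul, QuaternionAlgebra.imK_mul]
  have hJ : J * J = algebraMap ℚ _ (p : ℚ) := by
    rw [hJdef, ← map_mul, hjj, AlgEquiv.commutes]
  set a := J.re with ha'
  set b := J.imI
  set c := J.imJ
  set d := J.imK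
  have h1 : a * a + (-1) * b * b + (q : ℚ) * c * c - (-1) * (q : ℚ) * d * d = (p : ℚ) := by
    have := congrArg QuaternionAlgebra.re hJ
    rw [QuaternionAlgebra.re_mul, QuaternionAlgebra.algebraMap_eq] at this; dsimp only at this; linear_combination this
  have h2 : a * b + b * a - (q : ℚ) * c * d + (q : ℚ) * d * c = 0 := by
    have := congrArg QuaternionAlgebra.imI hJ
    rw [QuaternionAlgebra.imI_mul, QuaternionAlgebra.algebraMap_eq] at this; dsimp only at this; linear_combination this
  have h3 : a * c + (-1) * b * d + c * a - (-1) * d * b = 0 := by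
    have := congrArg QuaternionAlgebra.imJ hJ
    rw [QuaternionAlgebra.imJ_mul, QuaternionAlgebra.algebraMap_eq] at this; dsimp only at this; linear_combination this
  have h4 : a * d + b * c - c * b + d * a = 0 := by
    have := congrArg QuaternionAlgebra.imK hJ
    rw [QuaternionAlgebra.imK_mul, QuaternionAlgebra.algebraMap_eq] at this; dsimp only at this; linear_combination this
  by_cases haz : a = 0
  · apply aux_rat p q hp hq hne hq4 hsq b c d
    rw [haz] at h1
    linear_combination h1
  · have hb : b = 0 := by
      have : a * b = 0 := by linear_combination h2 / 2
      exact (mul_eq_zero.mp this).resolve_left haz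
    have hc : c = 0 := by
      have : a * c = 0 := by linear_combination h3 / 2
      exact (mul_eq_zero.mp this).resolve_left haz
    have hd : d = 0 := by
      have : a * d = 0 := by linear_combination h4 / 2
      exact (mul_eq_zero.mp this).resolve_left haz
    apply aux_not_sq_rat p hp a
    rw [hb, hc, hd] at h1
    linear_combination h1

/-- for distinct primes `p ≡ 3 (mod 4)` and `q ≡ 3 (mod 4)`, the quaternion
algebras `(−1, p / ℚ)` and `(−1, q / ℚ)` are not isomorphic. -/
theorem quaternionAlgebra_neg_one_p_q_not_iso (p q : ℕ)
    (hp : p.Prime) (hq : q.Prime) (hne : p ≠ q)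
    (hp4 : p % 4 = 3) (hq4 : q % 4 = 3) :
    ¬ Nonempty (ℍ[ℚ, -1, (p : ℚ)] ≃ₐ[ℚ] ℍ[ℚ, -1, (q : ℚ)]) := by
  rintro ⟨φ⟩
  haveI : Fact p.Prime := ⟨hp⟩
  haveI : Fact q.Prime := ⟨hq⟩
  by_cases hs : IsSquare ((p : ZMod q))
  · exact aux_main p q hp hq hne hq4 hs φ
  · have hs' : IsSquare ((q : ZMod p)) :=
      (ZMod.exists_sq_eq_prime_iff_of_mod_four_eq_three hp4 hq4 hne).mpr hs
    exact aux_main q p hq hp hne.symm hp4 hs' φ.symm
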